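/- Fix K ≥ 2 and a kernel t ∈ {spd, gd}. (i) For all finite simple graphs G1, G2, vertices v1 ∈ G1, v2 ∈ G2, and every iteration l, if the K-hop color refinement with kernel t assigns v1 and v2 equal colors at iteration l, then 1-WL color refinement assigns them equal colors at iteration l. (ii) There exist finite simple graphs G1 and G2 with the same number of vertices such that 1-WL yields equal multisets of vertex colors at every iteration, while the 2-hop color refinement with kernel t yields different multisets of vertex colors already after one iteration. Hence a proper K-hop message passing GNN with K > 1 is strictly more powerful than 1-hop message passing GNNs. -/

import Mathlib

/-!
STATEMENT 2: Fix K ≥ 2 and a kernel t ∈ {spd, gd}.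
(i) K-hop color refinement with kernel t refines 1-WL: vertices with equal K-hop colors
at iteration l have equal 1-WL colors at iteration l.
(ii) There are finite simple graphs of the same size that 1-WL never separates (equal
multisets of colors at every iteration) while 2-hop refinement with kernel t separates
them after one iteration. Hence a proper K-hop message passing GNN with K > 1 is
strictly more powerful than 1-hop message passing GNNs.
-/

namespace KHopStmt2

/-- The two kernels of K-hop neighbors. -/
inductive Kernel
  | spd
  | gd

/-- k-th hop neighbors under the shortest-path-distance kernel: vertices at graph
distance exactly `k` from `v`. -/
noncomputable def Qspd {V : Type*} [Fintype V] (G : SimpleGraph V) (v : V) (k : ℕ) :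
    Finset V := by
  classical
  exact Finset.univ.filter fun u => G.Reachable v u ∧ G.dist v u = k

/-- k-th hop neighbors under the graph-diffusion kernel: vertices `u ≠ v` admitting a
walk of length exactly `k` from `v` to `u` (and `{v}` itself for `k = 0`). -/
noncomputable def Qgd {V : Type*} [Fintype V] (G : SimpleGraph V) (v : V) (k : ℕ) :
    Finset V := by
  classical
  exact if k = 0 then {v}
    else Finset.univ.filter fun u => u ≠ v ∧ ∃ w : G.Walk v u, w.length = k

/-- k-th hop neighbors under kernel `t`. -/
noncomputable def Qhop {V : Type*} [Fintype V] (t : Kernel) (G : SimpleGraph V) (v : V)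
    (k : ℕ) : Finset V :=
  match t with
  | .spd => Qspd G v k
  | .gd => Qgd G v k

/-- 1-WL color refinement, expressed as a relation comparing the iteration-`l` colors
of a vertex of `G1` with a vertex of `G2`: all vertices share the constant initial
color, and `c_{l+1}(v) = (c_l(v), {{c_l(u) : u adjacent to v}})`, multiset equality
being expressed by a color-preserving bijection of neighborhoods. -/
def WLEquiv {V1 V2 : Type*} (G1 : SimpleGraph V1) (G2 : SimpleGraph V2) :
    ℕ → V1 → V2 → Prop
  | 0, _, _ => True
  | (l + 1), v, u => WLEquiv G1 G2 l v u ∧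
      ∃ σ : G1.neighborSet v ≃ G2.neighborSet u,
        ∀ w : G1.neighborSet v, WLEquiv G1 G2 l w.1 (σ w).1

/-- K-hop color refinement with kernel `t`: all vertices share the constant initial
color, and `c_{l+1}(v) = (c_l(v), ({{c_l(u) : u ∈ Q^{k,t}_v}})_{k=1,…,K})`. -/
def KhopEquiv {V1 V2 : Type*} [Fintype V1] [Fintype V2] (K : ℕ) (t : Kernel)
    (G1 : SimpleGraph V1) (G2 : SimpleGraph V2) : ℕ → V1 → V2 → Prop
  | 0, _, _ => True
  | (l + 1), v, u => KhopEquiv K t G1 G2 l v u ∧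
      ∀ k : ℕ, 1 ≤ k → k ≤ K →
        ∃ σ : {w // w ∈ Qhop t G1 v k} ≃ {w // w ∈ Qhop t G2 u k},
          ∀ w : {w // w ∈ Qhop t G1 v k}, KhopEquiv K t G1 G2 l w.1 (σ w).1



/-- Walks of length two correspond to common neighbors. -/
lemma walk_length_two_iff {V : Type*} (G : SimpleGraph V) (v u : V) :
    (∃ w : G.Walk v u, w.length = 2) ↔ ∃ x, G.Adj v x ∧ G.Adj x u := by
  constructor
  · rintro ⟨w, hw⟩
    cases w with
    | nil => simp at hw
    | cons h q =>
      cases q with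
      | nil => simp at hw
      | cons h' q' =>
        simp [SimpleGraph.Walk.length_cons] at hw
        have := SimpleGraph.Walk.Nil.eq hw
        subst this
        exact ⟨_, h, h'⟩
  · rintro ⟨x, h1, h2⟩
    exact ⟨.cons h1 (.cons h2 .nil), rfl⟩

lemma mem_Qspd_two {V : Type*} [Fintype V] (G : SimpleGraph V) (v u : V) :
    u ∈ Qspd G v 2 ↔ u ≠ v ∧ ¬ G.Adj v u ∧ ∃ x, G.Adj v x ∧ G.Adj x u := by
  classical
  simp only [Qspd, Finset.mem_filter, Finset.mem_univ, true_and]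
  constructor
  · rintro ⟨hr, hd⟩
    have hne : u ≠ v := by
      rintro rfl
      simp [SimpleGraph.dist_self] at hd
    have hna : ¬ G.Adj v u := by
      intro h
      have := SimpleGraph.dist_eq_one_iff_adj.mpr h
      omega
    obtain ⟨p, hp⟩ := hr.exists_walk_length_eq_dist
    rw [hd] at hp
    exact ⟨hne, hna, (walk_length_two_iff G v u).mp ⟨p, hp⟩⟩
  · rintro ⟨hne, hna, x, h1, h2⟩
    obtain ⟨w, hw⟩ := (walk_length_two_iff G v u).mpr ⟨x, h1, h2⟩
    have hr : G.Reachable v u := ⟨w⟩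
    refine ⟨hr, ?_⟩
    have hle : G.dist v u ≤ 2 := hw ▸ SimpleGraph.dist_le w
    have h0 : G.dist v u ≠ 0 :=
      SimpleGraph.dist_ne_zero_iff_ne_and_reachable.mpr ⟨hne.symm, hr⟩
    have h1' : G.dist v u ≠ 1 := fun h => hna (SimpleGraph.dist_eq_one_iff_adj.mp h)
    omega

lemma mem_Qgd_two {V : Type*} [Fintype V] (G : SimpleGraph V) (v u : V) :
    u ∈ Qgd G v 2 ↔ u ≠ v ∧ ∃ x, G.Adj v x ∧ G.Adj x u := by
  classical
  simp only [Qgd, if_neg (by norm_num : (2:ℕ) ≠ 0), Finset.mem_filter, Finset.mem_univ,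
    true_and, walk_length_two_iff]

lemma mem_Qhop_one {V : Type*} [Fintype V] (t : Kernel) (G : SimpleGraph V) (v u : V) :
    u ∈ Qhop t G v 1 ↔ G.Adj v u := by
  classical
  cases t with
  | spd =>
    simp only [Qhop, Qspd, Finset.mem_filter, Finset.mem_univ, true_and]
    constructor
    · rintro ⟨_, hd⟩; exact SimpleGraph.dist_eq_one_iff_adj.mp hd
    · intro h; exact ⟨⟨h.toWalk⟩, SimpleGraph.dist_eq_one_iff_adj.mpr h⟩
  | gd =>
    simp only [Qhop, Qgd, if_neg (by norm_num : (1:ℕ) ≠ 0), Finset.mem_filter,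
      Finset.mem_univ, true_and]
    constructor
    · rintro ⟨hne, w, hw⟩
      cases w with
      | nil => simp at hw
      | cons h q =>
        simp [SimpleGraph.Walk.length_cons] at hw
        have := SimpleGraph.Walk.Nil.eq hw
        subst this
        exact h
    · intro h
      exact ⟨h.ne', ⟨h.toWalk, rfl⟩⟩

/-- The 8-cycle. -/
def C8 : SimpleGraph (Fin 8) where
  Adj v u := u = v + 1 ∨ v = u + 1
  symm := ⟨fun v u h =>
    (by decide : ∀ v u : Fin 8, (u = v + 1 ∨ v = u + 1) → (v = u + 1 ∨ u = v + 1)) v u h⟩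
  loopless := ⟨fun v h => (by decide : ∀ v : Fin 8, ¬(v = v + 1 ∨ v = v + 1)) v h⟩

def edges4 : List (ℕ × ℕ) := [(0,1),(1,2),(2,3),(3,0),(4,5),(5,6),(6,7),(7,4)]

/-- Two disjoint 4-cycles on 8 vertices. -/
def CC4 : SimpleGraph (Fin 8) where
  Adj v u := (v.val, u.val) ∈ edges4 ∨ (u.val, v.val) ∈ edges4
  symm := ⟨fun v u h =>
    (by decide : ∀ v u : Fin 8, ((v.val, u.val) ∈ edges4 ∨ (u.val, v.val) ∈ edges4) →
      ((u.val, v.val) ∈ edges4 ∨ (v.val, u.val) ∈ edges4)) v u h⟩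
  loopless := ⟨fun v h =>
    (by decide : ∀ v : Fin 8, ¬((v.val, v.val) ∈ edges4 ∨ (v.val, v.val) ∈ edges4)) v h⟩

instance : DecidableRel C8.Adj := fun _ _ => inferInstanceAs (Decidable (_ ∨ _))
instance : DecidableRel CC4.Adj := fun _ _ => inferInstanceAs (Decidable (_ ∨ _))
-- the theorem proof body, appended after aux + the given defs

lemma WLEquiv_of_regular {V1 V2 : Type*} (G1 : SimpleGraph V1) (G2 : SimpleGraph V2)
    (h1 : ∀ (v : V1) (u : V2), Nonempty (G1.neighborSet v ≃ G2.neighborSet u)) :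
    ∀ (l : ℕ) (v : V1) (u : V2), WLEquiv G1 G2 l v u := by
  intro l
  induction l with
  | zero => intro v u; trivial
  | succ l ih =>
    intro v u
    obtain ⟨σ⟩ := h1 v u
    exact ⟨ih v u, σ, fun w => ih _ _⟩

lemma deg_C8 : ∀ v : Fin 8, C8.degree v = 2 := by decide
lemma deg_CC4 : ∀ v : Fin 8, CC4.degree v = 2 := by decide

lemma part_one (K : ℕ) (hK : 2 ≤ K) (t : Kernel) :
    ∀ (V1 V2 : Type) [Fintype V1] [Fintype V2]
        (G1 : SimpleGraph V1) (G2 : SimpleGraph V2) (l : ℕ) (v1 : V1) (v2 : V2),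
        KhopEquiv K t G1 G2 l v1 v2 → WLEquiv G1 G2 l v1 v2 := by
  intro V1 V2 _ _ G1 G2 l
  induction l with
  | zero => intro v1 v2 _; trivial
  | succ l ih =>
    rintro v1 v2 ⟨h0, hb⟩
    refine ⟨ih v1 v2 h0, ?_⟩
    obtain ⟨σ, hσ⟩ := hb 1 le_rfl (by omega)
    let e1 : {w // w ∈ Qhop t G1 v1 1} ≃ G1.neighborSet v1 :=
      Equiv.subtypeEquivRight (fun u => mem_Qhop_one t G1 v1 u)
    let e2 : {w // w ∈ Qhop t G2 v2 1} ≃ G2.neighborSet v2 :=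
      Equiv.subtypeEquivRight (fun u => mem_Qhop_one t G2 v2 u)
    refine ⟨(e1.symm.trans σ).trans e2, fun w => ?_⟩
    exact ih _ _ (hσ (e1.symm w))

lemma Qspd_C8 : Qspd C8 (0 : Fin 8) 2 = ({2, 6} : Finset (Fin 8)) := by
  ext u
  rw [mem_Qspd_two]
  revert u
  decide

lemma Qgd_C8 : Qgd C8 (0 : Fin 8) 2 = ({2, 6} : Finset (Fin 8)) := by
  ext u
  rw [mem_Qgd_two]
  revert u
  decide

lemma Qspd_CC4 (v : Fin 8) :
    Qspd CC4 v 2 = Finset.univ.filter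
      (fun u => u ≠ v ∧ ¬ CC4.Adj v u ∧ ∃ x, CC4.Adj v x ∧ CC4.Adj x u) := by
  ext u
  rw [mem_Qspd_two, Finset.mem_filter]
  simp

lemma Qgd_CC4 (v : Fin 8) :
    Qgd CC4 v 2 = Finset.univ.filter (fun u => u ≠ v ∧ ∃ x, CC4.Adj v x ∧ CC4.Adj x u) := by
  ext u
  rw [mem_Qgd_two, Finset.mem_filter]
  simp

lemma card_Qhop_C8 (t : Kernel) : (Qhop t C8 (0 : Fin 8) 2).card = 2 := by
  cases t with
  | spd => rw [show Qhop .spd C8 (0:Fin 8) 2 = Qspd C8 0 2 from rfl, Qspd_C8]; decide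
  | gd => rw [show Qhop .gd C8 (0:Fin 8) 2 = Qgd C8 0 2 from rfl, Qgd_C8]; decide

lemma card_Qhop_CC4 (t : Kernel) (v : Fin 8) : (Qhop t CC4 v 2).card = 1 := by
  cases t with
  | spd =>
    rw [show Qhop .spd CC4 v 2 = Qspd CC4 v 2 from rfl, Qspd_CC4]
    revert v; decide
  | gd =>
    rw [show Qhop .gd CC4 v 2 = Qgd CC4 v 2 from rfl, Qgd_CC4]
    revert v; decide

/-- (i) For K ≥ 2 and any kernel t, equal K-hop refinement colors at
iteration l imply equal 1-WL colors at iteration l, for arbitrary finite simple graphs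
and vertices. (ii) There exist finite simple graphs of the same size whose multisets of
1-WL colors agree at every iteration while the multisets of 2-hop (kernel t) refinement
colors already differ after one iteration. Hence proper K-hop message passing with
K > 1 is strictly more powerful than 1-hop message passing. -/
theorem khop_strictly_more_powerful_than_1hop (K : ℕ) (hK : 2 ≤ K) (t : Kernel) :
    (∀ (V1 V2 : Type) [Fintype V1] [Fintype V2]
        (G1 : SimpleGraph V1) (G2 : SimpleGraph V2) (l : ℕ) (v1 : V1) (v2 : V2),
        KhopEquiv K t G1 G2 l v1 v2 → WLEquiv G1 G2 l v1 v2) ∧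
    (∃ (n : ℕ) (G1 G2 : SimpleGraph (Fin n)),
        (∀ l : ℕ, ∃ σ : Fin n ≃ Fin n, ∀ v, WLEquiv G1 G2 l v (σ v)) ∧
        ¬ ∃ σ : Fin n ≃ Fin n, ∀ v, KhopEquiv 2 t G1 G2 1 v (σ v)) := by
  constructor
  · exact part_one K hK t
  · refine ⟨8, C8, CC4, ?_, ?_⟩
    · intro l
      refine ⟨Equiv.refl _, fun v => ?_⟩
      refine WLEquiv_of_regular C8 CC4 (fun v u => ?_) l v _
      refine Fintype.card_eq.mp ?_
      rw [SimpleGraph.card_neighborSet_eq_degree, SimpleGraph.card_neighborSet_eq_degree,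
        deg_C8, deg_CC4]
    · rintro ⟨σ, hσ⟩
      obtain ⟨-, hb⟩ := hσ 0
      obtain ⟨e, -⟩ := hb 2 (by norm_num) le_rfl
      have hc := Fintype.card_congr e
      rw [Fintype.card_coe, Fintype.card_coe, card_Qhop_C8, card_Qhop_CC4] at hc
      exact absurd hc (by norm_num)

end KHopStmt2
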